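/- Let ℱ ⊆ ([n] choose ℓ) be an intersecting family. If there exist F, F' ∈ ℱ with x ∈ F ∩ F' and |F ∩ F'| ≥ 2, then the number of sets of ℱ containing x is at least γ_{ℓ-1}(ℱ) + 2. -/
import Mathlib


theorem stmt_2 (n ℓ : ℕ) (hℓ : 1 ≤ ℓ) (F : Finset (Finset (Fin n)))
    (huniform : ∀ A ∈ F, A.card = ℓ)
    (hint : ∀ A ∈ F, ∀ B ∈ F, (A ∩ B).Nonempty)
    (x : Fin n)
    (A B : Finset (Fin n)) (hA : A ∈ F) (hB : B ∈ F) (hAB : A ≠ B)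
    (hxAB : x ∈ A ∩ B) (hcap : 2 ≤ (A ∩ B).card)
    (γ : ℕ)
    (hγ : IsLeast {m : ℕ | ∃ S : Finset (Fin n), S.card = ℓ - 1 ∧
      (F.filter (fun C => C ∩ S = ∅)).card = m} γ) :
    γ + 2 ≤ (F.filter (fun C => x ∈ C)).card := by
  simp only [Finset.mem_inter] at hxAB
  obtain ⟨hxA, hxB⟩ := hxAB
  set S := A.erase x with hS
  have hScard : S.card = ℓ - 1 := by
    rw [hS, Finset.card_erase_of_mem hxA, huniform A hA]
  have hγle : γ ≤ (F.filter (fun C => C ∩ S = ∅)).card :=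
    hγ.2 ⟨S, hScard, rfl⟩
  -- there is y ∈ A ∩ B with y ≠ x
  obtain ⟨y, hy, hyx⟩ : ∃ y ∈ A ∩ B, y ≠ x :=
    Finset.exists_mem_ne (by omega) x
  simp only [Finset.mem_inter] at hy
  have hAnot : ¬ (A ∩ S = ∅) := by
    intro h
    have : y ∈ A ∩ S := by
      simp [hS, Finset.mem_erase, hyx, hy.1]
    simp [h] at this
  have hBnot : ¬ (B ∩ S = ∅) := by
    intro h
    have : y ∈ B ∩ S := by
      simp [hS, Finset.mem_erase, hyx, hy.1, hy.2]
    simp [h] at this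
  have hsub : insert A (insert B (F.filter (fun C => C ∩ S = ∅)))
      ⊆ F.filter (fun C => x ∈ C) := by
    intro C hC
    simp only [Finset.mem_insert] at hC
    rcases hC with rfl | rfl | hC
    · exact Finset.mem_filter.2 ⟨hA, hxA⟩
    · exact Finset.mem_filter.2 ⟨hB, hxB⟩
    · rw [Finset.mem_filter] at hC ⊢
      refine ⟨hC.1, ?_⟩
      obtain ⟨z, hz⟩ := hint C hC.1 A hA
      simp only [Finset.mem_inter] at hz
      by_contra hxC
      have : z ∈ C ∩ S := by
        simp [hS, Finset.mem_erase, hz.1, hz.2]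
        rintro rfl; exact hxC hz.1
      rw [hC.2] at this
      simp at this
  have hcard : (insert A (insert B (F.filter (fun C => C ∩ S = ∅)))).card
      = (F.filter (fun C => C ∩ S = ∅)).card + 2 := by
    rw [Finset.card_insert_of_notMem, Finset.card_insert_of_notMem]
    · intro h; exact hBnot (Finset.mem_filter.1 h).2
    · simp only [Finset.mem_insert]
      rintro (rfl | h)
      · exact hAB rfl
      · exact hAnot (Finset.mem_filter.1 h).2
  have := Finset.card_le_card hsub
  omega
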